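/- Let S₁ and S₂ be lowest big-trees. If PStab(S₁) ∩ PStab(S₂) is infinite, then S₁ = S₂ (and hence PStab(S₁) = PStab(S₂)). -/

import Mathlib

open MulAction Pointwise

/-- The pointwise stabilizer of a set of vertices `S`. -/
def PStab (G : Type*) [Group G] {V : Type*} [MulAction G V] (S : Set V) : Subgroup G :=
  ⨅ v ∈ S, MulAction.stabilizer G v

/-- `S` is a subtree of `T`: it is nonempty and its induced subgraph is connected. -/
def IsSubtree {V : Type*} (T : SimpleGraph V) (S : Set V) : Prop :=
  S.Nonempty ∧ (T.induce S).Connected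

/-- `S` is a nontrivial subtree: a subtree containing two adjacent vertices. -/
def IsNontrivialSubtree {V : Type*} (T : SimpleGraph V) (S : Set V) : Prop :=
  IsSubtree T S ∧ ∃ u ∈ S, ∃ v ∈ S, T.Adj u v

/-- `S` is a big-tree: a nontrivial subtree with infinite pointwise stabilizer, not properly
contained in a subtree with the same pointwise stabilizer. -/
def IsBigTree (G : Type*) [Group G] {V : Type*} [MulAction G V]
    (T : SimpleGraph V) (S : Set V) : Prop :=
  IsNontrivialSubtree T S ∧ ((PStab G S : Subgroup G) : Set G).Infinite ∧
    ¬ ∃ S' : Set V, IsSubtree T S' ∧ S ⊂ S' ∧ PStab G S' = PStab G S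

/-- A big-tree is lowest if it is not properly contained in another big-tree. -/
def IsLowestBigTree (G : Type*) [Group G] {V : Type*} [MulAction G V]
    (T : SimpleGraph V) (S : Set V) : Prop :=
  IsBigTree G T S ∧ ¬ ∃ S' : Set V, IsBigTree G T S' ∧ S ⊂ S'

section Aux
variable {G V : Type*} [Group G] [MulAction G V] {T : SimpleGraph V}

lemma mem_PStab' {S : Set V} {g : G} : g ∈ PStab G S ↔ ∀ v ∈ S, g • v = v := by
  simp [PStab, Subgroup.mem_iInf, MulAction.mem_stabilizer_iff]

lemma PStab_antitone' {S S' : Set V} (h : S ⊆ S') : PStab G S' ≤ PStab G S := by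
  intro g hg
  rw [mem_PStab'] at hg ⊢
  exact fun v hv => hg v (h hv)

def gIso (hadj : ∀ (g : G) (u v : V), T.Adj u v ↔ T.Adj (g • u) (g • v)) (g : G) :
    T ≃g T :=
  ⟨MulAction.toPerm g, fun {a b} => (hadj g a b).symm⟩

lemma fix_support (htree : T.IsTree)
    (hadj : ∀ (g : G) (u v : V), T.Adj u v ↔ T.Adj (g • u) (g • v)) (g : G) :
    ∀ {u v : V} (p : T.Walk u v), p.IsPath → g • u = u → g • v = v →
      ∀ w ∈ p.support, g • w = w := by
  intro u v p
  induction p with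
  | nil =>
    intro _ hu _ w hw
    simp only [SimpleGraph.Walk.support_nil, List.mem_singleton] at hw
    subst hw; exact hu
  | @cons u x v h q ih =>
    intro hp hu hv w hw
    set f := gIso hadj g with hf
    have hfa : ∀ a : V, f a = g • a := fun a => rfl
    have hinj : Function.Injective f := f.toEquiv.injective
    have h1 : (((SimpleGraph.Walk.cons h q).map f.toHom).copy hu hv).IsPath := by
      erw [SimpleGraph.Walk.isPath_copy]
      exact SimpleGraph.Walk.map_isPath_of_injective hinj hp
    have hmap : ((SimpleGraph.Walk.cons h q).map f.toHom).copy hu hv =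
        SimpleGraph.Walk.cons h q :=
      (htree.existsUnique_path u v).unique h1 hp
    have hsup := congrArg SimpleGraph.Walk.support hmap
    erw [SimpleGraph.Walk.support_copy, SimpleGraph.Walk.support_map] at hsup
    have hqsup : q.support = x :: q.support.tail := q.support_eq_cons
    rw [SimpleGraph.Walk.support_cons, hqsup, List.map_cons, List.map_cons] at hsup
    have hx : g • x = x := by
      have h2 := ((List.cons.injEq _ _ _ _).mp hsup).2
      have h3 := ((List.cons.injEq _ _ _ _).mp h2).1
      exact h3
    rw [SimpleGraph.Walk.support_cons, List.mem_cons] at hw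
    rcases hw with rfl | hw
    · exact hu
    · exact ih hp.of_cons hx hv w hw

lemma subtree_iff_walks (S : Set V) :
    IsSubtree T S ↔ (S.Nonempty ∧ ∀ a ∈ S, ∀ b ∈ S,
      ∃ p : T.Walk a b, ∀ w ∈ p.support, w ∈ S) := by
  constructor
  · rintro ⟨hne, hconn⟩
    refine ⟨hne, fun a ha b hb => ?_⟩
    obtain ⟨q⟩ := hconn ⟨a, ha⟩ ⟨b, hb⟩
    refine ⟨q.map (SimpleGraph.Embedding.induce S).toHom, fun w hw => ?_⟩
    erw [SimpleGraph.Walk.support_map, List.mem_map] at hw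
    obtain ⟨⟨w', hw'⟩, -, rfl⟩ := hw
    exact hw'
  · rintro ⟨hne, hwalk⟩
    refine ⟨hne, ?_⟩
    have hreach : ∀ {a b : V} (p : T.Walk a b) (ha : a ∈ S) (hb : b ∈ S),
        (∀ w ∈ p.support, w ∈ S) → (T.induce S).Reachable ⟨a, ha⟩ ⟨b, hb⟩ := by
      intro a b p
      induction p with
      | nil => intro ha hb _; rfl
      | @cons a x b h q ih =>
        intro ha hb hsup
        have hx : x ∈ S := hsup x (by simp [SimpleGraph.Walk.support_cons,
          q.start_mem_support])
        have hadj' : (T.induce S).Adj ⟨a, ha⟩ ⟨x, hx⟩ := h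
        exact hadj'.reachable.trans (ih hx hb (fun w hw => hsup w (by
          simp [SimpleGraph.Walk.support_cons, hw])))
    rw [SimpleGraph.connected_iff]
    constructor
    · rintro ⟨a, ha⟩ ⟨b, hb⟩
      obtain ⟨p, hp⟩ := hwalk a ha b hb
      exact hreach p ha hb hp
    · obtain ⟨a, ha⟩ := hne
      exact ⟨⟨a, ha⟩⟩

end Aux

/-- if `S₁`, `S₂` are lowest big-trees and `PStab S₁ ∩ PStab S₂` is infinite, then
`S₁ = S₂` (and hence `PStab S₁ = PStab S₂`). -/
theorem lowestBigTree_eq_of_infinite_inter_pstab {G V : Type*} [Group G] [MulAction G V]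
    (T : SimpleGraph V) (htree : T.IsTree)
    (hadj : ∀ (g : G) (u v : V), T.Adj u v ↔ T.Adj (g • u) (g • v))
    (hninv : ¬ ∃ (g : G) (u v : V), T.Adj u v ∧ g • u = v ∧ g • v = u)
    (S₁ S₂ : Set V) (h₁ : IsLowestBigTree G T S₁) (h₂ : IsLowestBigTree G T S₂)
    (hinf : ((PStab G S₁ ⊓ PStab G S₂ : Subgroup G) : Set G).Infinite) :
    S₁ = S₂ ∧ PStab G S₁ = PStab G S₂ := by
  set H : Subgroup G := PStab G S₁ ⊓ PStab G S₂ with hH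
  set F : Set V := {v | ∀ g ∈ H, g • v = v} with hF
  -- S₁ and S₂ are contained in F
  have hSF : ∀ (S : Set V), H ≤ PStab G S → S ⊆ F := by
    intro S hle v hv g hg
    exact mem_PStab'.mp (hle hg) v hv
  have hS₁F : S₁ ⊆ F := hSF S₁ inf_le_left
  have hS₂F : S₂ ⊆ F := hSF S₂ inf_le_right
  obtain ⟨a₀, ha₀⟩ := h₁.1.1.1.1
  -- F is a subtree
  have hFsub : IsSubtree T F := by
    rw [subtree_iff_walks]
    refine ⟨⟨a₀, hS₁F ha₀⟩, fun a ha b hb => ?_⟩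
    obtain ⟨p, hp, -⟩ := htree.existsUnique_path a b
    refine ⟨p, fun w hw g hg => ?_⟩
    exact fix_support htree hadj g p hp (ha g hg) (hb g hg) w hw
  -- H is contained in PStab F
  have hHF : H ≤ PStab G F := by
    intro g hg
    rw [mem_PStab']
    exact fun v hv => hv g hg
  -- Zorn: a maximal subtree M ⊇ F with PStab M = PStab F
  set 𝒞 : Set (Set V) := {S | IsSubtree T S ∧ F ⊆ S ∧ PStab G S = PStab G F} with h𝒞
  have hzorn : ∃ M, F ⊆ M ∧ Maximal (· ∈ 𝒞) M := by
    refine zorn_subset_nonempty 𝒞 ?_ F ⟨hFsub, subset_rfl, rfl⟩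
    intro c hc hchain hcne
    refine ⟨⋃₀ c, ⟨?_, ?_, ?_⟩, fun s hs => Set.subset_sUnion_of_mem hs⟩
    · -- ⋃₀ c is a subtree
      rw [subtree_iff_walks]
      obtain ⟨S₀, hS₀⟩ := hcne
      constructor
      · exact ⟨a₀, Set.mem_sUnion_of_mem ((hc hS₀).2.1 (hS₁F ha₀)) hS₀⟩
      · rintro a ha b hb
        obtain ⟨Sa, hSa, haSa⟩ := ha
        obtain ⟨Sb, hSb, hbSb⟩ := hb
        have : ∃ Sc ∈ c, a ∈ Sc ∧ b ∈ Sc := by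
          rcases eq_or_ne Sa Sb with rfl | hne
          · exact ⟨Sa, hSa, haSa, hbSb⟩
          · rcases hchain hSa hSb hne with hsub | hsub
            · exact ⟨Sb, hSb, hsub haSa, hbSb⟩
            · exact ⟨Sa, hSa, haSa, hsub hbSb⟩
        obtain ⟨Sc, hSc, haSc, hbSc⟩ := this
        obtain ⟨-, hw⟩ := (subtree_iff_walks Sc).mp (hc hSc).1
        obtain ⟨p, hp⟩ := hw a haSc b hbSc
        exact ⟨p, fun w hws => Set.mem_sUnion_of_mem (hp w hws) hSc⟩
    · -- F ⊆ ⋃₀ c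
      obtain ⟨S₀, hS₀⟩ := hcne
      exact subset_trans (hc hS₀).2.1 (Set.subset_sUnion_of_mem hS₀)
    · -- PStab (⋃₀ c) = PStab F
      apply le_antisymm
      · obtain ⟨S₀, hS₀⟩ := hcne
        exact le_trans (PStab_antitone'
          (subset_trans (hc hS₀).2.1 (Set.subset_sUnion_of_mem hS₀))) le_rfl
      · intro g hg
        rw [mem_PStab']
        rintro v ⟨S, hS, hvS⟩
        exact mem_PStab'.mp ((hc hS).2.2 ▸ hg : g ∈ PStab G S) v hvS
  obtain ⟨M, hFM, hMmem, hMmax⟩ := hzorn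
  obtain ⟨hMsub, hFM', hMstab⟩ := hMmem
  -- M is a big-tree
  have hMbig : IsBigTree G T M := by
    refine ⟨⟨hMsub, ?_⟩, ?_, ?_⟩
    · obtain ⟨u, hu, v, hv, huv⟩ := h₁.1.1.2
      exact ⟨u, hFM (hS₁F hu), v, hFM (hS₁F hv), huv⟩
    · refine hinf.mono ?_
      intro g hg
      exact hMstab ▸ hHF hg
    · rintro ⟨S', hS'sub, hMS', hS'stab⟩
      have : S' ∈ 𝒞 := ⟨hS'sub, subset_trans hFM hMS'.subset, hS'stab.trans hMstab⟩
      exact hMS'.not_subset (hMmax this hMS'.subset)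
  -- lowestness forces S₁ = M = S₂
  have hS₁M : S₁ = M := by
    by_contra hne
    exact h₁.2 ⟨M, hMbig, ⟨subset_trans hS₁F hFM, fun h => hne
      (subset_antisymm (subset_trans hS₁F hFM) h)⟩⟩
  have hS₂M : S₂ = M := by
    by_contra hne
    exact h₂.2 ⟨M, hMbig, ⟨subset_trans hS₂F hFM, fun h => hne
      (subset_antisymm (subset_trans hS₂F hFM) h)⟩⟩
  have : S₁ = S₂ := hS₁M.trans hS₂M.symm
  exact ⟨this, by rw [this]⟩
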